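/- Let π be a permutation of length n-1 avoiding 2431, 4231, 1432, 4132, and let p(π) be the maximal index i such that there exist j < i < k with π(j) < π(i) and π(k) < π(i) (with p(π) = 0 if no such i exists). Then inserting the element n at position q yields a permutation avoiding all four patterns if and only if q > p(π). -/

import Mathlib

def Contains {n k : ℕ} (τ : Equiv.Perm (Fin n)) (p : Fin k → ℕ) : Prop :=
  ∃ f : Fin k → Fin n, StrictMono f ∧ ∀ a b, p a < p b ↔ τ (f a) < τ (f b)

def AvoidsPat {n k : ℕ} (τ : Equiv.Perm (Fin n)) (p : Fin k → ℕ) : Prop := ¬ Contains τ p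

/-- Insert a new maximal element into the permutation `π` at (0-based) position `p`. -/
def insertMax {m : ℕ} (π : Equiv.Perm (Fin m)) (p : Fin (m + 1)) : Equiv.Perm (Fin (m + 1)) :=
  (finSuccEquiv' p).trans ((Equiv.optionCongr π).trans (finSuccEquiv' (Fin.last m)).symm)

/-- `pVal π` is the maximal 1-based position `i` such that there are `j < i < k` with
`π j < π i` and `π k < π i` (the position of the rightmost entry playing the role of the
`3` in a `132`- or `231`-pattern), and `0` if no such position exists. -/
noncomputable def pVal {m : ℕ} (π : Equiv.Perm (Fin m)) : ℕ :=
  sSup {v : ℕ | ∃ j i k : Fin m, j < i ∧ i < k ∧ π j < π i ∧ π k < π i ∧ v = (i : ℕ) + 1}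

/-! ### Auxiliary material -/

private lemma finMk_two (h : 2 < 4) : (⟨2, h⟩ : Fin 4) = 2 := rfl
private lemma finMk_three (h : 3 < 4) : (⟨3, h⟩ : Fin 4) = 3 := rfl

/-- A combined pattern: some index `c` has a bigger element on one side before it,
a smaller element on the other side before it, and a smaller element after it. -/
def ContainsAny {n : ℕ} (τ : Equiv.Perm (Fin n)) : Prop :=
  ∃ a b c d : Fin n, a < b ∧ b < c ∧ c < d ∧ τ d < τ c ∧
    ((τ a < τ c ∧ τ c < τ b) ∨ (τ b < τ c ∧ τ c < τ a))

lemma contains_mk {n : ℕ} (τ : Equiv.Perm (Fin n)) (p : Fin 4 → ℕ) (a b c d : Fin n)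
    (hab : a < b) (hbc : b < c) (hcd : c < d)
    (h : ∀ x y : Fin 4, p x < p y ↔ τ (![a, b, c, d] x) < τ (![a, b, c, d] y)) :
    Contains τ p := by
  refine ⟨![a, b, c, d], ?_, h⟩
  rw [Fin.strictMono_iff_lt_succ]
  intro i
  fin_cases i <;> simpa using (by assumption : _)

lemma contains_any_iff {n : ℕ} (τ : Equiv.Perm (Fin n)) :
    (Contains τ ![2,4,3,1] ∨ Contains τ ![4,2,3,1] ∨
     Contains τ ![1,4,3,2] ∨ Contains τ ![4,1,3,2]) ↔ ContainsAny τ := by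
  constructor
  · rintro (⟨f, hm, hf⟩ | ⟨f, hm, hf⟩ | ⟨f, hm, hf⟩ | ⟨f, hm, hf⟩) <;>
      refine ⟨f 0, f 1, f 2, f 3,
        hm (by decide : (0 : Fin 4) < 1), hm (by decide : (1 : Fin 4) < 2),
        hm (by decide : (2 : Fin 4) < 3), (hf 3 2).mp (by decide), ?_⟩
    · exact Or.inl ⟨(hf 0 2).mp (by decide), (hf 2 1).mp (by decide)⟩
    · exact Or.inr ⟨(hf 1 2).mp (by decide), (hf 2 0).mp (by decide)⟩
    · exact Or.inl ⟨(hf 0 2).mp (by decide), (hf 2 1).mp (by decide)⟩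
    · exact Or.inr ⟨(hf 1 2).mp (by decide), (hf 2 0).mp (by decide)⟩
  · rintro ⟨a, b, c, d, hab, hbc, hcd, hdc, hdisj⟩
    have had : a ≠ d := ne_of_lt (hab.trans (hbc.trans hcd))
    have hbd : b ≠ d := ne_of_lt (hbc.trans hcd)
    rcases hdisj with ⟨h1, h2⟩ | ⟨h1, h2⟩
    · rcases (τ.injective.ne had).lt_or_gt with hx | hx
      · -- τ a < τ d : pattern 1432 (order τa < τd < τc < τb)
        refine Or.inr (Or.inr (Or.inl (contains_mk τ _ a b c d hab hbc hcd ?_)))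
        have k1 : (τ a).val < (τ d).val := hx
        have k2 : (τ d).val < (τ c).val := hdc
        have k3 : (τ c).val < (τ b).val := h2
        intro x y
        fin_cases x <;> fin_cases y <;>
          simp only [Fin.lt_def, Fin.isValue, finMk_two, finMk_three, Fin.mk_zero, Fin.mk_one,
            Matrix.cons_val_zero, Matrix.cons_val_one, Matrix.head_cons, Matrix.cons_val_two,
            Matrix.tail_cons, Matrix.cons_val_three] <;> omega
      · -- τ d < τ a : pattern 2431 (order τd < τa < τc < τb)
        refine Or.inl (contains_mk τ _ a b c d hab hbc hcd ?_)
        have k1 : (τ d).val < (τ a).val := hx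
        have k2 : (τ a).val < (τ c).val := h1
        have k3 : (τ c).val < (τ b).val := h2
        intro x y
        fin_cases x <;> fin_cases y <;>
          simp only [Fin.lt_def, Fin.isValue, finMk_two, finMk_three, Fin.mk_zero, Fin.mk_one,
            Matrix.cons_val_zero, Matrix.cons_val_one, Matrix.head_cons, Matrix.cons_val_two,
            Matrix.tail_cons, Matrix.cons_val_three] <;> omega
    · rcases (τ.injective.ne hbd).lt_or_gt with hx | hx
      · -- τ b < τ d : pattern 4132 (order τb < τd < τc < τa)
        refine Or.inr (Or.inr (Or.inr (contains_mk τ _ a b c d hab hbc hcd ?_)))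
        have k1 : (τ b).val < (τ d).val := hx
        have k2 : (τ d).val < (τ c).val := hdc
        have k3 : (τ c).val < (τ a).val := h2
        intro x y
        fin_cases x <;> fin_cases y <;>
          simp only [Fin.lt_def, Fin.isValue, finMk_two, finMk_three, Fin.mk_zero, Fin.mk_one,
            Matrix.cons_val_zero, Matrix.cons_val_one, Matrix.head_cons, Matrix.cons_val_two,
            Matrix.tail_cons, Matrix.cons_val_three] <;> omega
      · -- τ d < τ b : pattern 4231 (order τd < τb < τc < τa)
        refine Or.inr (Or.inl (contains_mk τ _ a b c d hab hbc hcd ?_))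
        have k1 : (τ d).val < (τ b).val := hx
        have k2 : (τ b).val < (τ c).val := h1
        have k3 : (τ c).val < (τ a).val := h2
        intro x y
        fin_cases x <;> fin_cases y <;>
          simp only [Fin.lt_def, Fin.isValue, finMk_two, finMk_three, Fin.mk_zero, Fin.mk_one,
            Matrix.cons_val_zero, Matrix.cons_val_one, Matrix.head_cons, Matrix.cons_val_two,
            Matrix.tail_cons, Matrix.cons_val_three] <;> omega

lemma avoids_iff {n : ℕ} (τ : Equiv.Perm (Fin n)) :
    (AvoidsPat τ ![2,4,3,1] ∧ AvoidsPat τ ![4,2,3,1] ∧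
     AvoidsPat τ ![1,4,3,2] ∧ AvoidsPat τ ![4,1,3,2]) ↔ ¬ ContainsAny τ := by
  rw [← contains_any_iff]
  unfold AvoidsPat
  tauto

lemma insertMax_self {m : ℕ} (π : Equiv.Perm (Fin m)) (q : Fin (m + 1)) :
    insertMax π q q = Fin.last m := by
  simp [insertMax, finSuccEquiv'_at]

lemma insertMax_succAbove {m : ℕ} (π : Equiv.Perm (Fin m)) (q : Fin (m + 1)) (j : Fin m) :
    insertMax π q (q.succAbove j) = (π j).castSucc := by
  simp [insertMax, finSuccEquiv'_succAbove, finSuccEquiv'_symm_some]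

lemma pVal_lt_iff {m : ℕ} (π : Equiv.Perm (Fin m)) (t : ℕ) (ht : 0 < t) :
    pVal π < t ↔ ∀ j i k : Fin m, j < i → i < k → π j < π i → π k < π i → (i : ℕ) + 1 < t := by
  set S := {v : ℕ | ∃ j i k : Fin m, j < i ∧ i < k ∧ π j < π i ∧ π k < π i ∧ v = (i : ℕ) + 1}
    with hS
  have hbdd : BddAbove S := by
    refine ⟨m, ?_⟩
    rintro v ⟨j, i, k, _, _, _, _, rfl⟩
    exact i.isLt
  constructor
  · intro h j i k h1 h2 h3 h4
    have hmem : (i : ℕ) + 1 ∈ S := ⟨j, i, k, h1, h2, h3, h4, rfl⟩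
    exact lt_of_le_of_lt (le_csSup hbdd hmem) h
  · intro h
    by_contra hlt
    push_neg at hlt
    have hne : S.Nonempty := by
      by_contra he
      rw [Set.not_nonempty_iff_eq_empty] at he
      rw [pVal, ← hS, he, csSup_empty] at hlt
      simp at hlt
      omega
    have hmem := Nat.sSup_mem hne hbdd
    obtain ⟨j, i, k, h1, h2, h3, h4, hv⟩ := hmem
    have := h j i k h1 h2 h3 h4
    have : t ≤ sSup S := hlt
    rw [pVal, ← hS] at hlt
    omega

lemma le_of_lt_succAbove {m : ℕ} {q : Fin (m + 1)} {i : Fin m}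
    (h : q < q.succAbove i) : (q : ℕ) ≤ (i : ℕ) := by
  by_contra hc
  push_neg at hc
  have hci : i.castSucc < q := by rw [Fin.lt_def, Fin.coe_castSucc]; exact hc
  rw [Fin.succAbove_of_castSucc_lt q i hci, Fin.lt_def, Fin.coe_castSucc] at h
  omega

theorem stmt11 {m : ℕ} (π : Equiv.Perm (Fin m))
    (hav : AvoidsPat π ![2,4,3,1] ∧ AvoidsPat π ![4,2,3,1] ∧
           AvoidsPat π ![1,4,3,2] ∧ AvoidsPat π ![4,1,3,2])
    (q : Fin (m + 1)) :
    (AvoidsPat (insertMax π q) ![2,4,3,1] ∧ AvoidsPat (insertMax π q) ![4,2,3,1] ∧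
     AvoidsPat (insertMax π q) ![1,4,3,2] ∧ AvoidsPat (insertMax π q) ![4,1,3,2]) ↔
    pVal π < (q : ℕ) + 1 := by
  rw [avoids_iff] at hav ⊢
  set σ := insertMax π q with hσ
  constructor
  · -- avoidance implies pVal π ≤ q
    intro hno
    rw [pVal_lt_iff _ _ (Nat.succ_pos _)]
    intro j i k h1 h2 h3 h4
    by_contra hle
    push_neg at hle
    have hqi : (q : ℕ) ≤ (i : ℕ) := by omega
    apply hno
    have hci : q ≤ i.castSucc := by rw [Fin.le_def]; simpa using hqi
    have hqc : q < q.succAbove i := by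
      rw [Fin.succAbove_of_le_castSucc q i hci]
      exact lt_of_le_of_lt hci Fin.castSucc_lt_succ
    by_cases hjq : (j : ℕ) < (q : ℕ)
    · -- pattern: (π j) , max , (π i) , (π k)
      refine ⟨q.succAbove j, q, q.succAbove i, q.succAbove k, ?_, hqc,
        Fin.succAbove_lt_succAbove_iff.mpr h2, ?_, Or.inl ⟨?_, ?_⟩⟩
      · rw [Fin.succAbove_of_castSucc_lt q j (by rw [Fin.lt_def]; simpa using hjq)]
        rw [Fin.lt_def]; simpa using hjq
      · rw [insertMax_succAbove, insertMax_succAbove]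
        exact Fin.castSucc_lt_castSucc_iff.mpr h4
      · rw [insertMax_succAbove, insertMax_succAbove]
        exact Fin.castSucc_lt_castSucc_iff.mpr h3
      · rw [insertMax_succAbove, insertMax_self]
        exact Fin.castSucc_lt_last _
    · -- pattern: max , (π j) , (π i) , (π k)
      push_neg at hjq
      have hqj : q < q.succAbove j := by
        have hcj : q ≤ j.castSucc := by rw [Fin.le_def]; simpa using hjq
        rw [Fin.succAbove_of_le_castSucc q j hcj]
        exact lt_of_le_of_lt hcj Fin.castSucc_lt_succ
      refine ⟨q, q.succAbove j, q.succAbove i, q.succAbove k, hqj,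
        Fin.succAbove_lt_succAbove_iff.mpr h1,
        Fin.succAbove_lt_succAbove_iff.mpr h2, ?_, Or.inr ⟨?_, ?_⟩⟩
      · rw [insertMax_succAbove, insertMax_succAbove]
        exact Fin.castSucc_lt_castSucc_iff.mpr h4
      · rw [insertMax_succAbove, insertMax_succAbove]
        exact Fin.castSucc_lt_castSucc_iff.mpr h3
      · rw [insertMax_succAbove, insertMax_self]
        exact Fin.castSucc_lt_last _
  · -- pVal π ≤ q implies avoidance
    intro hlt hC
    obtain ⟨a, b, c, d, hab, hbc, hcd, hdc, hdisj⟩ := hC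
    have hlast : ∀ x : Fin (m + 1), σ x ≤ Fin.last m := fun x => Fin.le_last _
    have hcq : c ≠ q := by
      intro h
      have : σ c = Fin.last m := by rw [h, hσ, insertMax_self]
      rcases hdisj with ⟨_, h2⟩ | ⟨_, h2⟩ <;> rw [this] at h2 <;>
        exact absurd h2 (not_lt.mpr (hlast _))
    have hdq : d ≠ q := by
      intro h
      have : σ d = Fin.last m := by rw [h, hσ, insertMax_self]
      rw [this] at hdc
      exact absurd hdc (not_lt.mpr (hlast _))
    obtain ⟨ic, hic⟩ := Fin.exists_succAbove_eq hcq
    obtain ⟨kd, hkd⟩ := Fin.exists_succAbove_eq hdq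
    have hick : ic < kd := by
      rw [← Fin.succAbove_lt_succAbove_iff (p := q), hic, hkd]; exact hcd
    have hvdc : π kd < π ic := by
      have : σ (q.succAbove kd) < σ (q.succAbove ic) := by rw [hic, hkd]; exact hdc
      rw [hσ, insertMax_succAbove, insertMax_succAbove,
        Fin.castSucc_lt_castSucc_iff] at this
      exact this
    rw [pVal_lt_iff _ _ (Nat.succ_pos _)] at hlt
    rcases hdisj with ⟨h1, h2⟩ | ⟨h1, h2⟩
    · -- σ a < σ c < σ b
      have haq : a ≠ q := by
        intro h
        have : σ a = Fin.last m := by rw [h, hσ, insertMax_self]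
        rw [this] at h1
        exact absurd h1 (not_lt.mpr (hlast _))
      obtain ⟨ja, hja⟩ := Fin.exists_succAbove_eq haq
      have hvac : π ja < π ic := by
        have : σ (q.succAbove ja) < σ (q.succAbove ic) := by rw [hja, hic]; exact h1
        rwa [hσ, insertMax_succAbove, insertMax_succAbove,
          Fin.castSucc_lt_castSucc_iff] at this
      by_cases hbq : b = q
      · -- new maximum plays the role of the big element before c
        have hjc : ja < ic := by
          rw [← Fin.succAbove_lt_succAbove_iff (p := q), hja, hic]
          exact hab.trans hbc
        have hqc : q < q.succAbove ic := by rw [hic]; rw [← hbq]; exact hbc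
        have := le_of_lt_succAbove hqc
        have := hlt ja ic kd hjc hick hvac hvdc
        omega
      · -- all four entries avoid the new maximum: pattern already in π
        obtain ⟨jb, hjb⟩ := Fin.exists_succAbove_eq hbq
        have hvcb : π ic < π jb := by
          have : σ (q.succAbove ic) < σ (q.succAbove jb) := by rw [hjb, hic]; exact h2
          rwa [hσ, insertMax_succAbove, insertMax_succAbove,
            Fin.castSucc_lt_castSucc_iff] at this
        refine hav ⟨ja, jb, ic, kd, ?_, ?_, hick, hvdc, Or.inl ⟨hvac, hvcb⟩⟩
        · rw [← Fin.succAbove_lt_succAbove_iff (p := q), hja, hjb]; exact hab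
        · rw [← Fin.succAbove_lt_succAbove_iff (p := q), hjb, hic]; exact hbc
    · -- σ b < σ c < σ a
      have hbq : b ≠ q := by
        intro h
        have : σ b = Fin.last m := by rw [h, hσ, insertMax_self]
        rw [this] at h1
        exact absurd h1 (not_lt.mpr (hlast _))
      obtain ⟨jb, hjb⟩ := Fin.exists_succAbove_eq hbq
      have hvbc : π jb < π ic := by
        have : σ (q.succAbove jb) < σ (q.succAbove ic) := by rw [hjb, hic]; exact h1
        rwa [hσ, insertMax_succAbove, insertMax_succAbove,
          Fin.castSucc_lt_castSucc_iff] at this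
      by_cases haq : a = q
      · -- new maximum plays the role of the big element before c
        have hjc : jb < ic := by
          rw [← Fin.succAbove_lt_succAbove_iff (p := q), hjb, hic]; exact hbc
        have hqb : q < q.succAbove jb := by rw [hjb]; rw [← haq]; exact hab
        have h5 := le_of_lt_succAbove hqb
        have := hlt jb ic kd hjc hick hvbc hvdc
        have : (jb : ℕ) < (ic : ℕ) := hjc
        omega
      · obtain ⟨ja, hja⟩ := Fin.exists_succAbove_eq haq
        have hvca : π ic < π ja := by
          have : σ (q.succAbove ic) < σ (q.succAbove ja) := by rw [hja, hic]; exact h2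
          rwa [hσ, insertMax_succAbove, insertMax_succAbove,
            Fin.castSucc_lt_castSucc_iff] at this
        refine hav ⟨ja, jb, ic, kd, ?_, ?_, hick, hvdc, Or.inr ⟨hvbc, hvca⟩⟩
        · rw [← Fin.succAbove_lt_succAbove_iff (p := q), hja, hjb]; exact hab
        · rw [← Fin.succAbove_lt_succAbove_iff (p := q), hjb, hic]; exact hbc
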